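/- Let G be an n-vertex d-regular graph whose adjacency matrix has smallest eigenvalue λ_min ≥ −d + 2εn. Then G is ε/2-far from bipartite: for every bipartition (A,B) of V(G), e(A) + e(B) ≥ (1/2)·ε·n². -/

import Mathlib

open Finset
open scoped Classical

abbrev V (n : ℕ) : Type := Fin n → ZMod 2

def dotp {n : ℕ} (α x : V n) : ZMod 2 := ∑ i, α i * x i

def IsBool {n : ℕ} (f : V n → ℝ) : Prop := ∀ x, f x = 0 ∨ f x = 1

/-- `f` is odd-cycle-free: no odd `k` and `x_1,…,x_k` in the support summing to `0`. -/
def OCF {n : ℕ} (f : V n → ℝ) : Prop :=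
  ∀ k : ℕ, Odd k → ¬ ∃ x : Fin k → V n, (∀ i, f (x i) = 1) ∧ (∑ i, x i) = 0

noncomputable def fhat {n : ℕ} (f : V n → ℝ) (α : V n) : ℝ :=
  (∑ x : V n, f x * (-1 : ℝ) ^ (dotp α x).val) / 2 ^ n

/-- `f` is `ε`-far from odd-cycle-free: every Boolean OCF function differs from `f`
on at least `ε·2^n` points. -/
def FarFromOCF {n : ℕ} (ε : ℝ) (f : V n → ℝ) : Prop :=
  ∀ g : V n → ℝ, IsBool g → OCF g →
    ε * 2 ^ n ≤ ((Finset.univ.filter fun x => f x ≠ g x).card : ℝ)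

open Matrix in
lemma quad_ge {m : Type*} [Fintype m] [DecidableEq m] (M : Matrix m m ℝ)
    (hM : M.IsHermitian) (c : ℝ)
    (hc : ∀ μ : ℝ, Module.End.HasEigenvalue (Matrix.toLin' M) μ → c ≤ μ)
    (x : m → ℝ) : c * (x ⬝ᵥ x) ≤ x ⬝ᵥ (M *ᵥ x) := by
  have hc' : ∀ i, c ≤ hM.eigenvalues i := by
    intro i
    apply hc
    rw [Module.End.hasEigenvalue_iff_mem_spectrum]
    have h1 : spectrum ℝ (Matrix.toLin' M) = spectrum ℝ M := by
      rw [← Matrix.toLin_eq_toLin' (R := ℝ)]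
      exact AlgEquiv.spectrum_eq (Matrix.toLinAlgEquiv (Pi.basisFun ℝ m)) M
    rw [h1]
    exact hM.eigenvalues_mem_spectrum_real i
  set U : Matrix m m ℝ := (hM.eigenvectorUnitary : Matrix m m ℝ) with hU
  set y : m → ℝ := x ᵥ* U with hy
  have hspec := hM.spectral_theorem
  have hUU : U * star U = 1 := Matrix.mem_unitaryGroup_iff.mp hM.eigenvectorUnitary.2
  have hyx : star U *ᵥ x = y := by
    rw [hy, star_eq_conjTranspose, conjTranspose_eq_transpose_of_trivial, mulVec_transpose]
  have key : x ⬝ᵥ (M *ᵥ x) = ∑ i, hM.eigenvalues i * (y i)^2 := by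
    conv_lhs => rw [hspec, Unitary.conjStarAlgAut_apply]
    rw [← hU, ← mulVec_mulVec, ← mulVec_mulVec, hyx, dotProduct_mulVec, ← hy, dotProduct]
    apply Finset.sum_congr rfl
    intro i _
    rw [mulVec_diagonal]
    simp
    ring
  have norm_eq : x ⬝ᵥ x = ∑ i, (y i)^2 := by
    have : y ⬝ᵥ y = x ⬝ᵥ x := by
      rw [← hyx, dotProduct_mulVec, hyx, hy, vecMul_vecMul, star_eq_conjTranspose]
      rw [← star_eq_conjTranspose, hUU, vecMul_one]
    rw [← this, dotProduct]
    simp [sq]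
  rw [key, norm_eq, Finset.mul_sum]
  apply Finset.sum_le_sum
  intro i _
  exact mul_le_mul_of_nonneg_right (hc' i) (sq_nonneg _)

theorem stmt9 {Vt : Type*} [Fintype Vt] [DecidableEq Vt] (G : SimpleGraph Vt)
    [DecidableRel G.Adj] (d : ℕ) (hreg : G.IsRegularOfDegree d) (ε : ℝ) (lmin : ℝ)
    (hmin : Module.End.HasEigenvalue (Matrix.toLin' (G.adjMatrix ℝ)) lmin)
    (hle : ∀ μ : ℝ, Module.End.HasEigenvalue (Matrix.toLin' (G.adjMatrix ℝ)) μ → lmin ≤ μ)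
    (hbound : lmin ≥ -(d : ℝ) + 2 * ε * Fintype.card Vt) :
    ∀ A : Finset Vt,
      (1 / 2) * ε * (Fintype.card Vt : ℝ) ^ 2 ≤
        (∑ u ∈ A, ∑ v ∈ A, G.adjMatrix ℝ u v) / 2 +
          (∑ u ∈ Aᶜ, ∑ v ∈ Aᶜ, G.adjMatrix ℝ u v) / 2 := by
  intro A
  set M : Matrix Vt Vt ℝ := G.adjMatrix ℝ with hM
  set n : ℝ := (Fintype.card Vt : ℝ) with hn
  have hn0 : (0:ℝ) ≤ n := Nat.cast_nonneg _
  set x : Vt → ℝ := fun v => if v ∈ A then 1 else -1 with hx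
  have hxA : ∀ u ∈ A, x u = 1 := fun u hu => if_pos hu
  have hxB : ∀ u ∈ Aᶜ, x u = -1 := fun u hu => if_neg (Finset.mem_compl.mp hu)
  have hherm : M.IsHermitian := by
    rw [hM, Matrix.IsHermitian, Matrix.conjTranspose_eq_transpose_of_trivial]
    exact SimpleGraph.isSymm_adjMatrix G
  have hquad := quad_ge M hherm lmin hle x
  -- x ⬝ᵥ x = n
  have hxx : dotProduct x x = n := by
    rw [dotProduct]
    have : ∀ v : Vt, x v * x v = 1 := by
      intro v; rw [hx]; dsimp only; split_ifs <;> norm_num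
    rw [Finset.sum_congr rfl fun v _ => this v]
    simp [hn]
  -- row sums
  have hrow : ∀ u : Vt, ∑ v, M u v = (d : ℝ) := by
    intro u
    have h := hreg u
    rw [← SimpleGraph.card_neighborFinset_eq_degree, SimpleGraph.neighborFinset_eq_filter] at h
    simp only [hM, SimpleGraph.adjMatrix_apply]
    rw [Finset.sum_boole, h]
  set SAA : ℝ := ∑ u ∈ A, ∑ v ∈ A, M u v with hSAA
  set SAB : ℝ := ∑ u ∈ A, ∑ v ∈ Aᶜ, M u v with hSAB
  set SBA : ℝ := ∑ u ∈ Aᶜ, ∑ v ∈ A, M u v with hSBA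
  set SBB : ℝ := ∑ u ∈ Aᶜ, ∑ v ∈ Aᶜ, M u v with hSBB
  have hT : SAA + SAB + SBA + SBB = n * d := by
    have h1 : ∑ u : Vt, ∑ v : Vt, M u v = n * d := by
      rw [Finset.sum_congr rfl fun u _ => hrow u]
      simp [hn, mul_comm]
    rw [← Finset.sum_add_sum_compl A (fun u => ∑ v : Vt, M u v)] at h1
    have h2 : ∀ u : Vt, ∑ v : Vt, M u v = ∑ v ∈ A, M u v + ∑ v ∈ Aᶜ, M u v :=
      fun u => (Finset.sum_add_sum_compl A _).symm
    rw [Finset.sum_congr rfl fun u _ => h2 u, Finset.sum_congr (rfl : Aᶜ = Aᶜ) fun u _ => h2 u,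
      Finset.sum_add_distrib, Finset.sum_add_distrib] at h1
    linarith [h1]
  have hQ : dotProduct x (M.mulVec x) = SAA + SBB - SAB - SBA := by
    have e1 : dotProduct x (M.mulVec x) = ∑ u : Vt, ∑ v : Vt, M u v * x u * x v := by
      simp only [dotProduct, Matrix.mulVec, Finset.mul_sum]
      exact Finset.sum_congr rfl fun u _ => Finset.sum_congr rfl fun v _ => by ring
    have inner : ∀ (c : ℝ) (u : Vt), x u = c →
        ∑ v : Vt, M u v * x u * x v = c * (∑ v ∈ A, M u v - ∑ v ∈ Aᶜ, M u v) := by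
      intro c u hc
      rw [← Finset.sum_add_sum_compl A (fun v => M u v * x u * x v)]
      rw [Finset.sum_congr rfl fun v hv => by rw [hc, hxA v hv],
        Finset.sum_congr (rfl : Aᶜ = Aᶜ) fun v hv => by rw [hc, hxB v hv]]
      rw [mul_sub, Finset.mul_sum, Finset.mul_sum, sub_eq_add_neg, ← Finset.sum_neg_distrib]
      congr 1
      · exact Finset.sum_congr rfl fun v _ => by ring
      · exact Finset.sum_congr rfl fun v _ => by ring
    rw [e1, ← Finset.sum_add_sum_compl A (fun u => ∑ v : Vt, M u v * x u * x v)]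
    rw [Finset.sum_congr rfl fun u hu => inner 1 u (hxA u hu),
      Finset.sum_congr (rfl : Aᶜ = Aᶜ) fun u hu => inner (-1) u (hxB u hu)]
    simp only [one_mul, neg_one_mul]
    rw [Finset.sum_sub_distrib, Finset.sum_neg_distrib, Finset.sum_sub_distrib]
    ring
  rw [hxx, hQ] at hquad
  have hb : (-(d:ℝ) + 2 * ε * n) * n ≤ lmin * n := mul_le_mul_of_nonneg_right hbound hn0
  nlinarith [hquad, hT, hb]
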